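/- Fix positive integers I, J, K, R, D and reals q, α, β > 0. Let g : ℝ^D → ℝ^{I×J} be P-Lipschitz (Euclidean norm on ℝ^D, Frobenius norm on ℝ^{I×J}) with P > 0, and suppose ‖g(z)‖_F ≤ β for all z in Z = {z ∈ ℝ^D : ‖z‖₂ ≤ q}. Then for every ε with 0 < ε ≤ R(α+β)·min(α, Pq), the solution set X(R,g) admits an ε-net, with respect to the Frobenius norm on ℝ^{I×J×K}, of cardinality at most (3R(α+β)/ε)^{R(K+D)} · α^{RK} · (Pq)^{RD}. -/

import Mathlib

/-- The Euclidean norm of a vector in `ℝ^n`. -/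
noncomputable def euclNorm {n : ℕ} (x : Fin n → ℝ) : ℝ := Real.sqrt (∑ i, x i ^ 2)

/-- The Frobenius norm of a real matrix. -/
noncomputable def frobNorm {m n : ℕ} (X : Matrix (Fin m) (Fin n) ℝ) : ℝ :=
  Real.sqrt (∑ i, ∑ j, X i j ^ 2)

/-- The Frobenius (Euclidean) norm of a tensor in `ℝ^{I×J×K}`. -/
noncomputable def tnorm {I J K : ℕ} (X : Fin I → Fin J → Fin K → ℝ) : ℝ :=
  Real.sqrt (∑ i, ∑ j, ∑ k, X i j k ^ 2)

/-- The solution set `X(R,g)`: all tensors `Σ_{r=1}^R g(z_r) ∘ c_r` with `‖z_r‖₂ ≤ q` and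
`‖c_r‖₂ ≤ α`. -/
def solSet (I J K R D : ℕ) (q α : ℝ) (g : (Fin D → ℝ) → Matrix (Fin I) (Fin J) ℝ) :
    Set (Fin I → Fin J → Fin K → ℝ) :=
  {X | ∃ (z : Fin R → Fin D → ℝ) (c : Fin R → Fin K → ℝ),
    (∀ r, euclNorm (z r) ≤ q) ∧ (∀ r, euclNorm (c r) ≤ α) ∧
    X = fun i j k => ∑ r, g (z r) i j * c r k}

open Metric MeasureTheory Set ENNReal in
private lemma packing_bound (n : ℕ) {ρ δ : ℝ} (hρ : 0 < ρ) (hδ : 0 < δ)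
    (F : Finset (EuclideanSpace ℝ (Fin n)))
    (hFB : ∀ x ∈ F, ‖x‖ ≤ ρ)
    (hsep : (↑F : Set (EuclideanSpace ℝ (Fin n))).Pairwise (fun x y => δ ≤ dist x y)) :
    (F.card : ℝ) ≤ ((ρ + δ/2) / (δ/2)) ^ n := by
  have hdisj : (↑F : Set (EuclideanSpace ℝ (Fin n))).PairwiseDisjoint
      (fun x => ball x (δ/2)) := by
    intro x hx y hy hxy
    exact ball_disjoint_ball (by linarith [hsep hx hy hxy])
  have hsub : ∀ x ∈ F, ball x (δ/2) ⊆ ball (0 : EuclideanSpace ℝ (Fin n)) (ρ + δ/2) := by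
    intro x hx z hz
    simp only [mem_ball, dist_zero_right] at *
    have : ‖z‖ - ‖x‖ ≤ dist z x := by
      simpa [dist_eq_norm] using norm_sub_norm_le z x
    linarith [hFB x hx]
  have hμ : ∀ (x : EuclideanSpace ℝ (Fin n)) (r : ℝ), 0 < r → volume (ball x r) =
      ENNReal.ofReal (r ^ n) * volume (ball (0 : EuclideanSpace ℝ (Fin n)) 1) := by
    intro x r hr
    rw [Measure.addHaar_ball_of_pos volume x hr]
    simp [finrank_euclideanSpace_fin]
  have hunion : volume (⋃ x ∈ F, ball x (δ/2)) =
      (F.card : ENNReal) * (ENNReal.ofReal ((δ/2) ^ n) *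
        volume (ball (0 : EuclideanSpace ℝ (Fin n)) 1)) := by
    rw [measure_biUnion_finset hdisj (fun x _ => measurableSet_ball)]
    rw [Finset.sum_congr rfl (fun x _ => hμ x _ (by linarith)), Finset.sum_const, nsmul_eq_mul]
  have hle : volume (⋃ x ∈ F, ball x (δ/2)) ≤
      volume (ball (0 : EuclideanSpace ℝ (Fin n)) (ρ + δ/2)) :=
    measure_mono (Set.iUnion₂_subset hsub)
  rw [hunion, hμ 0 (ρ + δ/2) (by linarith)] at hle
  have hU0 : volume (ball (0 : EuclideanSpace ℝ (Fin n)) 1) ≠ 0 :=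
    (measure_ball_pos volume _ one_pos).ne'
  have hUt : volume (ball (0 : EuclideanSpace ℝ (Fin n)) 1) ≠ ⊤ := measure_ball_lt_top.ne
  rw [← mul_assoc] at hle
  have hle2 : (F.card : ENNReal) * ENNReal.ofReal ((δ/2) ^ n) ≤
      ENNReal.ofReal ((ρ + δ/2) ^ n) :=
    (ENNReal.mul_le_mul_iff_left hU0 hUt).mp hle
  have hcast : (F.card : ENNReal) = ENNReal.ofReal (F.card : ℝ) := by
    simp [ENNReal.ofReal_natCast]
  rw [hcast, ← ENNReal.ofReal_mul (by positivity)] at hle2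
  have hreal : (F.card : ℝ) * (δ/2) ^ n ≤ (ρ + δ/2) ^ n :=
    (ENNReal.ofReal_le_ofReal_iff (by positivity)).mp hle2
  rw [div_pow, le_div_iff₀ (by positivity)]
  linarith

open Metric Set in
private lemma eucl_ball_net (n : ℕ) {ρ δ : ℝ} (hρ : 0 < ρ) (hδ : 0 < δ) (hδρ : δ ≤ ρ) :
    ∃ N : Finset (EuclideanSpace ℝ (Fin n)),
      (∀ x ∈ N, ‖x‖ ≤ ρ) ∧
      (∀ x : EuclideanSpace ℝ (Fin n), ‖x‖ ≤ ρ → ∃ y ∈ N, ‖x - y‖ ≤ δ) ∧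
      (N.card : ℝ) ≤ (3 * ρ / δ) ^ n := by
  set Sep : Set (Set (EuclideanSpace ℝ (Fin n))) :=
    {s | (∀ x ∈ s, ‖x‖ ≤ ρ) ∧ s.Pairwise (fun x y => δ ≤ dist x y)} with hSep
  obtain ⟨m, hm⟩ : ∃ m, Maximal (· ∈ Sep) m := by
    apply zorn_subset
    intro c hc hchain
    refine ⟨⋃₀ c, ⟨?_, ?_⟩, fun s hs => subset_sUnion_of_mem hs⟩
    · rintro x ⟨s, hs, hxs⟩
      exact (hc hs).1 x hxs
    · intro x hx y hy hxy
      obtain ⟨s, hs, hxs⟩ := hx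
      obtain ⟨t, ht, hyt⟩ := hy
      rcases hchain.total hs ht with h | h
      · exact (hc ht).2 (h hxs) hyt hxy
      · exact (hc hs).2 hxs (h hyt) hxy
  have hmB : ∀ x ∈ m, ‖x‖ ≤ ρ := hm.1.1
  have hmsep : m.Pairwise (fun x y => δ ≤ dist x y) := hm.1.2
  have hbound : ∀ F : Finset (EuclideanSpace ℝ (Fin n)), ↑F ⊆ m →
      (F.card : ℝ) ≤ ((ρ + δ/2) / (δ/2)) ^ n := fun F hF =>
    packing_bound n hρ hδ F (fun x hx => hmB x (hF hx)) (hmsep.mono hF)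
  have hfin : m.Finite := by
    rw [← Set.not_infinite]
    intro hinf
    obtain ⟨t, hts, htfin, htcard⟩ :=
      hinf.exists_subset_ncard_eq (⌈((ρ + δ/2) / (δ/2)) ^ n⌉₊ + 1)
    have hb := hbound htfin.toFinset (by simpa using hts)
    rw [Set.ncard_eq_toFinset_card _ htfin] at htcard
    rw [htcard] at hb
    have : ((ρ + δ/2) / (δ/2)) ^ n ≤ (⌈((ρ + δ/2) / (δ/2)) ^ n⌉₊ : ℝ) :=
      Nat.le_ceil _
    push_cast at hb
    linarith
  refine ⟨hfin.toFinset, by simpa using hmB, ?_, ?_⟩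
  · intro x hx
    by_contra hno
    push_neg at hno
    have hxm : x ∉ m := by
      intro hxm
      have := hno x (by simpa using hxm)
      simp at this
      linarith
    have hins : insert x m ∈ Sep := by
      constructor
      · rintro y (rfl | hy)
        · exact hx
        · exact hmB y hy
      · apply hmsep.insert
        intro y hy hxy
        have h1 : δ < ‖x - y‖ := hno y (by simpa using hy)
        constructor
        · rw [dist_eq_norm]; exact h1.le
        · rw [dist_eq_norm, norm_sub_rev]; exact h1.le
    have := hm.2 hins (Set.subset_insert x m)
    exact hxm (this (Set.mem_insert x m))
  · have := hbound hfin.toFinset (by simp)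
    refine this.trans (pow_le_pow_left₀ (by positivity) ?_ n)
    rw [div_le_div_iff₀ (by linarith) hδ]
    nlinarith

private def toE {I J K : ℕ} (X : Fin I → Fin J → Fin K → ℝ) :
    EuclideanSpace ℝ (Fin I × Fin J × Fin K) := WithLp.toLp 2 (fun p : Fin I × Fin J × Fin K => X p.1 p.2.1 p.2.2)

private lemma euclNorm_eq {n : ℕ} (x : EuclideanSpace ℝ (Fin n)) : euclNorm x = ‖x‖ := by
  rw [EuclideanSpace.norm_eq, euclNorm]
  congr 1; apply Finset.sum_congr rfl; intro i _
  rw [Real.norm_eq_abs, sq_abs]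

private lemma tnorm_eq {I J K : ℕ} (X : Fin I → Fin J → Fin K → ℝ) : tnorm X = ‖toE X‖ := by
  rw [EuclideanSpace.norm_eq, tnorm]
  congr 1
  rw [Fintype.sum_prod_type]
  apply Finset.sum_congr rfl; intro i _
  rw [Fintype.sum_prod_type]
  apply Finset.sum_congr rfl; intro j _
  apply Finset.sum_congr rfl; intro k _
  rw [Real.norm_eq_abs, sq_abs]; rfl

private lemma toE_sum {I J K R : ℕ} (T : Fin R → (Fin I → Fin J → Fin K → ℝ)) :
    toE (fun i j k => ∑ r, T r i j k) = ∑ r, toE (T r) := by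
  ext p
  have : (∑ r, toE (T r)) p = ∑ r, toE (T r) p := by
    induction (Finset.univ : Finset (Fin R)) using Finset.induction with
    | empty => rfl
    | insert _ _ h ih => rw [Finset.sum_insert h, Finset.sum_insert h, ← ih]; rfl
  rw [this]
  rfl

private lemma tnorm_sum_le {I J K R : ℕ} (T : Fin R → (Fin I → Fin J → Fin K → ℝ)) :
    tnorm (fun i j k => ∑ r, T r i j k) ≤ ∑ r, tnorm (T r) := by
  rw [tnorm_eq, toE_sum]
  refine (norm_sum_le _ _).trans_eq ?_
  exact Finset.sum_congr rfl fun r _ => (tnorm_eq (T r)).symm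

private lemma tnorm_add_le {I J K : ℕ} (X Y : Fin I → Fin J → Fin K → ℝ) :
    tnorm (fun i j k => X i j k + Y i j k) ≤ tnorm X + tnorm Y := by
  rw [tnorm_eq, tnorm_eq, tnorm_eq]
  exact (le_of_eq (congrArg norm (show toE (fun i j k => X i j k + Y i j k) = toE X + toE Y from rfl))).trans (norm_add_le (toE X) (toE Y))

private lemma tnorm_outer {I J K : ℕ} (S : Matrix (Fin I) (Fin J) ℝ) (c : Fin K → ℝ) :
    tnorm (fun i j k => S i j * c k) = frobNorm S * euclNorm c := by
  rw [tnorm, frobNorm, euclNorm, ← Real.sqrt_mul (by positivity)]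
  congr 1
  rw [Finset.sum_mul]
  apply Finset.sum_congr rfl; intro i _
  rw [Finset.sum_mul]
  apply Finset.sum_congr rfl; intro j _
  rw [Finset.mul_sum]
  apply Finset.sum_congr rfl; intro k _
  ring

private lemma frobNorm_nonneg {m n : ℕ} (X : Matrix (Fin m) (Fin n) ℝ) : 0 ≤ frobNorm X :=
  Real.sqrt_nonneg _

private lemma euclNorm_nonneg {n : ℕ} (x : Fin n → ℝ) : 0 ≤ euclNorm x :=
  Real.sqrt_nonneg _

set_option maxHeartbeats 800000 in
theorem solution_set_covering (I J K R D : ℕ)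
    (hI : 0 < I) (hJ : 0 < J) (hK : 0 < K) (hR : 0 < R) (hD : 0 < D)
    (q α β P ε : ℝ) (hq : 0 < q) (hα : 0 < α) (hβ : 0 < β) (hP : 0 < P)
    (g : (Fin D → ℝ) → Matrix (Fin I) (Fin J) ℝ)
    (hLip : ∀ z z' : Fin D → ℝ, frobNorm (g z - g z') ≤ P * euclNorm (z - z'))
    (hbd : ∀ z : Fin D → ℝ, euclNorm z ≤ q → frobNorm (g z) ≤ β)
    (hε : 0 < ε) (hεle : ε ≤ R * (α + β) * min α (P * q)) :
    ∃ N : Finset (Fin I → Fin J → Fin K → ℝ),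
      (↑N ⊆ solSet I J K R D q α g) ∧
      (∀ X ∈ solSet I J K R D q α g, ∃ Y ∈ N, tnorm (X - Y) ≤ ε) ∧
      (N.card : ℝ) ≤
        (3 * R * (α + β) / ε) ^ (R * (K + D)) * α ^ (R * K) * (P * q) ^ (R * D) := by
  classical
  have hRpos : (0:ℝ) < R := by exact_mod_cast hR
  have hαβ : 0 < α + β := by linarith
  set δc : ℝ := ε / (R * (α + β)) with hδc_def
  set δz : ℝ := ε / (P * (R * (α + β))) with hδz_def
  have hδc : 0 < δc := by positivity
  have hδz : 0 < δz := by positivity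
  have hδcle : δc ≤ α := by
    rw [hδc_def, div_le_iff₀ (by positivity)]
    calc ε ≤ R * (α + β) * min α (P * q) := hεle
      _ ≤ R * (α + β) * α := by
          have h := min_le_left α (P * q)
          exact mul_le_mul_of_nonneg_left h (by positivity)
      _ = α * (R * (α + β)) := by ring
  have hδzle : δz ≤ q := by
    rw [hδz_def, div_le_iff₀ (by positivity)]
    calc ε ≤ R * (α + β) * min α (P * q) := hεle
      _ ≤ R * (α + β) * (P * q) := by
          have h := min_le_right α (P * q)
          exact mul_le_mul_of_nonneg_left h (by positivity)
      _ = q * (P * (R * (α + β))) := by ring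
  obtain ⟨Nz, hNz1, hNz2, hNz3⟩ := eucl_ball_net D hq hδz hδzle
  obtain ⟨Nc, hNc1, hNc2, hNc3⟩ := eucl_ball_net K hα hδc hδcle
  set N : Finset (Fin I → Fin J → Fin K → ℝ) :=
    ((Fintype.piFinset fun _ : Fin R => Nz) ×ˢ (Fintype.piFinset fun _ : Fin R => Nc)).image
      (fun p => fun i j k => ∑ r, g (p.1 r) i j * p.2 r k) with hN_def
  refine ⟨N, ?_, ?_, ?_⟩
  · -- net is contained in the solution set
    intro Y hY
    simp only [hN_def, Finset.coe_image, Set.mem_image, Finset.mem_coe,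
      Finset.mem_product, Fintype.mem_piFinset] at hY
    obtain ⟨⟨zb, cb⟩, ⟨hzb, hcb⟩, rfl⟩ := hY
    refine ⟨fun r => zb r, fun r => cb r, ?_, ?_, rfl⟩
    · intro r; rw [euclNorm_eq]; exact hNz1 _ (hzb r)
    · intro r; rw [euclNorm_eq]; exact hNc1 _ (hcb r)
  · -- covering property
    rintro X ⟨z, c, hz, hc, rfl⟩
    choose zh hzhm hzh using fun r => hNz2 (WithLp.toLp 2 (z r)) (by rw [← euclNorm_eq]; exact hz r)
    choose ch hchm hch using fun r => hNc2 (WithLp.toLp 2 (c r)) (by rw [← euclNorm_eq]; exact hc r)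
    refine ⟨fun i j k => ∑ r, g (zh r) i j * ch r k, ?_, ?_⟩
    · rw [hN_def]
      apply Finset.mem_image.mpr
      exact ⟨(zh, ch), Finset.mem_product.mpr
        ⟨Fintype.mem_piFinset.mpr hzhm, Fintype.mem_piFinset.mpr hchm⟩, rfl⟩
    · -- the distance estimate
      have hXY : ((fun i j k => ∑ r, g (z r) i j * c r k) -
          (fun i j k => ∑ r, g (zh r) i j * ch r k)) =
          fun i j k => ∑ r, (g (z r) i j * c r k - g (zh r) i j * ch r k) := by
        funext i j k
        simp [Finset.sum_sub_distrib]
      rw [hXY]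
      have hterm : ∀ r, tnorm (fun i j k => g (z r) i j * c r k - g (zh r) i j * ch r k)
          ≤ β * δc + P * δz * α := by
        intro r
        have hsplit : (fun (i : Fin I) (j : Fin J) (k : Fin K) =>
            g (z r) i j * c r k - g (zh r) i j * ch r k) =
            fun i j k => (fun i j k => g (z r) i j * (fun k' => c r k' - ch r k') k) i j k +
              (fun i j k => (g (z r) - g (zh r)) i j * (fun k' => ch r k') k) i j k := by
          funext i j k
          simp only [Matrix.sub_apply, Pi.sub_apply]
          ring
        rw [hsplit]
        refine (tnorm_add_le _ _).trans ?_
        rw [tnorm_outer, tnorm_outer]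
        have h1 : frobNorm (g (z r)) ≤ β := hbd _ (hz r)
        have h2 : euclNorm (fun k' => c r k' - ch r k') ≤ δc := by
          have h := hch r
          rw [← euclNorm_eq] at h
          exact h
        have h3 : frobNorm (g (z r) - g (zh r)) ≤ P * δz := by
          refine (hLip _ _).trans ?_
          have hd := hzh r
          rw [← euclNorm_eq] at hd
          exact mul_le_mul_of_nonneg_left hd hP.le
        have h4 : euclNorm (fun k' => ch r k') ≤ α := by
          have h := hNc1 _ (hchm r)
          rw [← euclNorm_eq] at h
          exact h
        have n1 := frobNorm_nonneg (g (z r))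
        have n2 := euclNorm_nonneg (fun k' => c r k' - ch r k')
        have n3 := frobNorm_nonneg (g (z r) - g (zh r))
        have n4 := euclNorm_nonneg (fun k' => ch r k')
        nlinarith
      calc tnorm (fun i j k => ∑ r, (g (z r) i j * c r k - g (zh r) i j * ch r k))
          ≤ ∑ r : Fin R, tnorm (fun i j k => g (z r) i j * c r k - g (zh r) i j * ch r k) :=
            tnorm_sum_le _
        _ ≤ ∑ _r : Fin R, (β * δc + P * δz * α) := Finset.sum_le_sum fun r _ => hterm r
        _ = R * (β * δc + P * δz * α) := by
            rw [Finset.sum_const, Finset.card_univ, Fintype.card_fin, nsmul_eq_mul]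
        _ = ε := by
            rw [hδc_def, hδz_def]
            field_simp
            ring
  · -- cardinality bound
    have hcard1 : (N.card : ℝ) ≤ ((Nz.card : ℝ) ^ R) * ((Nc.card : ℝ) ^ R) := by
      have h1 : N.card ≤ (Nz.card ^ R) * (Nc.card ^ R) := by
        refine (Finset.card_image_le).trans ?_
        rw [Finset.card_product]
        apply Nat.mul_le_mul
        · rw [Fintype.card_piFinset]
          simp [Finset.prod_const]
        · rw [Fintype.card_piFinset]
          simp [Finset.prod_const]
      exact_mod_cast h1
    have hz3 : ((Nz.card : ℝ) ^ R) ≤ ((3 * q / δz) ^ D) ^ R :=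
      pow_le_pow_left₀ (by positivity) hNz3 R
    have hc3 : ((Nc.card : ℝ) ^ R) ≤ ((3 * α / δc) ^ K) ^ R :=
      pow_le_pow_left₀ (by positivity) hNc3 R
    have e1 : 3 * q / δz = (3 * (R:ℝ) * (α + β) / ε) * (P * q) := by
      rw [hδz_def]; field_simp
    have e2 : 3 * α / δc = (3 * (R:ℝ) * (α + β) / ε) * α := by
      rw [hδc_def]; field_simp
    calc (N.card : ℝ) ≤ ((Nz.card : ℝ) ^ R) * ((Nc.card : ℝ) ^ R) := hcard1
      _ ≤ ((3 * q / δz) ^ D) ^ R * ((3 * α / δc) ^ K) ^ R := by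
          apply mul_le_mul hz3 hc3 (by positivity) (by positivity)
      _ = (3 * R * (α + β) / ε) ^ (R * (K + D)) * α ^ (R * K) * (P * q) ^ (R * D) := by
          rw [e1, e2, ← pow_mul, ← pow_mul, mul_pow, mul_pow, mul_pow,
            show D * R = R * D by ring, show K * R = R * K by ring,
            show R * (K + D) = R * K + R * D by ring, pow_add]
          ring
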